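/- Define the parity-of-runs-of-ones sequence b by b_0 = 0, b_{2n} = b_n for n ≥ 1, b_{4n+1} = 1 - b_{2n} (i.e., for even argument m = 2n, b_{2m+1} = 1 - b_m), and b_{4n+3} = b_{2n+1} (for odd m, b_{2m+1} = b_m). Then b_n equals the parity of the number of runs of 1's in the binary representation of n. -/

import Mathlib

open Classical

/-- The number of runs of `1`'s (maximal blocks of consecutive `1` digits) in the
binary representation of `n`. -/
noncomputable def onesRuns (n : ℕ) : ℕ :=
  ((Finset.range (n + 1)).filter (fun i => n.testBit i ∧ ¬ n.testBit (i + 1))).card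

open Classical in
noncomputable def runInd (n i : ℕ) : ℕ :=
  if n.testBit i ∧ ¬ n.testBit (i + 1) then 1 else 0

lemma runInd_zero_of_ge {n i : ℕ} (h : n ≤ i) : runInd n i = 0 := by
  have ht : n.testBit i = false :=
    Nat.testBit_eq_false_of_lt (lt_of_le_of_lt h (@Nat.lt_two_pow_self i))
  simp [runInd, ht]

lemma onesRuns_eq_sum (n K : ℕ) (h : n ≤ K) :
    ∑ i ∈ Finset.range K, runInd n i = onesRuns n := by
  have key : ∀ M K', n ≤ K' → K' ≤ M →
      ∑ i ∈ Finset.range M, runInd n i = ∑ i ∈ Finset.range K', runInd n i := by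
    intro M K' h1 h2
    refine (Finset.sum_subset (Finset.range_mono h2) ?_).symm
    intro i _ hni
    have : K' ≤ i := by simpa using hni
    exact runInd_zero_of_ge (le_trans h1 this)
  have hc : onesRuns n = ∑ i ∈ Finset.range (n + 1), runInd n i := by
    unfold onesRuns runInd
    rw [Finset.card_filter]
  rw [hc, (key (max K (n+1)) K h (le_max_left _ _)).symm,
    key (max K (n+1)) (n+1) (Nat.le_succ n) (le_max_right _ _)]

lemma testBit_two_mul (n i : ℕ) : (2 * n).testBit (i + 1) = n.testBit i := by
  rw [Nat.testBit_succ, Nat.mul_div_cancel_left n (by norm_num)]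

lemma testBit_two_mul_zero (n : ℕ) : (2 * n).testBit 0 = false := by
  simp [Nat.testBit_zero, Nat.mul_mod_right]

lemma runInd_two_mul (n i : ℕ) : runInd (2 * n) (i + 1) = runInd n i := by
  simp [runInd, testBit_two_mul]

lemma onesRuns_two_mul (n : ℕ) : onesRuns (2 * n) = onesRuns n := by
  rw [← onesRuns_eq_sum (2 * n) (2 * n + 1) (Nat.le_succ _), Finset.sum_range_succ']
  simp only [runInd_two_mul]
  rw [onesRuns_eq_sum n (2 * n) (by omega)]
  simp [runInd, testBit_two_mul_zero]

lemma onesRuns_four_mul_add_one (n : ℕ) : onesRuns (4 * n + 1) = onesRuns n + 1 := by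
  have h2 : (4 * n + 1) / 2 = 2 * n := by omega
  have hb0 : (4 * n + 1).testBit 0 = true := by
    simp [Nat.testBit_zero]; omega
  have hb1 : ∀ i, (4 * n + 1).testBit (i + 1) = (2 * n).testBit i := by
    intro i; rw [Nat.testBit_succ, h2]
  rw [← onesRuns_eq_sum (4 * n + 1) (4 * n + 2) (Nat.le_succ _),
    Finset.sum_range_succ', Finset.sum_range_succ']
  have e2 : ∀ i, runInd (4 * n + 1) (i + 1 + 1) = runInd n i := by
    intro i
    simp only [runInd, hb1, testBit_two_mul]
  simp only [e2]
  rw [onesRuns_eq_sum n (4 * n) (by omega)]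
  have r1 : runInd (4 * n + 1) (0 + 1) = 0 := by
    simp [runInd, hb1, testBit_two_mul_zero]
  have r0 : runInd (4 * n + 1) 0 = 1 := by
    simp [runInd, hb0, hb1, testBit_two_mul_zero]
  omega

lemma onesRuns_two_mul_add_one (n : ℕ) :
    onesRuns (2 * n + 1) = onesRuns n + (if n.testBit 0 then 0 else 1) := by
  have h2 : (2 * n + 1) / 2 = n := by omega
  have hb0 : (2 * n + 1).testBit 0 = true := by
    simp [Nat.testBit_zero]
  have hb1 : ∀ i, (2 * n + 1).testBit (i + 1) = n.testBit i := by
    intro i; rw [Nat.testBit_succ, h2]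
  rw [← onesRuns_eq_sum (2 * n + 1) (2 * n + 2) (Nat.le_succ _), Finset.sum_range_succ']
  have e1 : ∀ i, runInd (2 * n + 1) (i + 1) = runInd n i := by
    intro i; simp only [runInd, hb1]
  simp only [e1]
  rw [onesRuns_eq_sum n (2 * n + 1) (by omega)]
  have r0 : runInd (2 * n + 1) 0 = if n.testBit 0 then 0 else 1 := by
    simp only [runInd, hb0, hb1]
    by_cases h : n.testBit 0 <;> simp [h]
  rw [r0]

lemma onesRuns_four_mul_add_three (n : ℕ) :
    onesRuns (4 * n + 3) = onesRuns (2 * n + 1) := by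
  have : 4 * n + 3 = 2 * (2 * n + 1) + 1 := by ring
  rw [this, onesRuns_two_mul_add_one, onesRuns_two_mul_add_one]
  have ht : (2 * n + 1).testBit 0 = true := by simp [Nat.testBit_zero]
  have ht2 : ∀ m, (2 * m).testBit 0 = false := testBit_two_mul_zero
  have : onesRuns (2 * n + 1) = onesRuns n + (if n.testBit 0 then 0 else 1) :=
    onesRuns_two_mul_add_one n
  simp [ht]

theorem parity_of_runs_of_ones (b : ℕ → ℕ) (h0 : b 0 = 0)
    (heven : ∀ n : ℕ, 1 ≤ n → b (2 * n) = b n)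
    (hodd1 : ∀ n : ℕ, b (4 * n + 1) = 1 - b (2 * n))
    (hodd2 : ∀ n : ℕ, b (4 * n + 3) = b (2 * n + 1)) :
    ∀ n : ℕ, b n = onesRuns n % 2 := by
  have hzero : onesRuns 0 = 0 := by simp [onesRuns, Nat.zero_testBit]
  intro n
  induction n using Nat.strong_induction_on with
  | _ n ih =>
    rcases Nat.eq_zero_or_pos n with h | hpos
    · subst h; simp [h0, hzero]
    rcases Nat.even_or_odd n with he | hodd
    · obtain ⟨k, hk⟩ := he
      have hk' : n = 2 * k := by omega
      subst hk'
      have hk1 : 1 ≤ k := by omega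
      rw [heven k hk1, onesRuns_two_mul, ih k (by omega)]
    · -- n odd: n = 4k+1 or n = 4k+3
      obtain ⟨a, ha⟩ := hodd
      rcases Nat.even_or_odd (n / 2) with he2 | ho2
      · obtain ⟨k, hk⟩ := he2
        have hn : n = 4 * k + 1 := by omega
        subst hn
        have hbk : b (2 * k) = onesRuns (2 * k) % 2 := by
          rcases Nat.eq_zero_or_pos k with h | h
          · subst h; simpa [hzero] using h0
          · rw [heven k h, onesRuns_two_mul, ih k (by omega)]
        rw [hodd1 k, hbk, onesRuns_four_mul_add_one, onesRuns_two_mul]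
        omega
      · obtain ⟨k, hk⟩ := ho2
        have hn : n = 4 * k + 3 := by omega
        subst hn
        rw [hodd2 k, onesRuns_four_mul_add_three, ih (2 * k + 1) (by omega)]
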